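/- Let ι be a finite index type with N elements. For x : ι → ℝ write ‖x‖₂ = √(∑ᵢ (x i)²) and ‖x‖₁ = ∑ᵢ |x i|. Let λ > 0, δ > 0, m ≥ 0, and let E₁, E₂, D₁, D₂ : ι → ℝ satisfy ‖D₁‖₂ ≥ δ, ‖D₂‖₂ ≥ δ, and ‖E₁‖₁ ≤ m. Define U₁ = −λ(‖E₁‖₁/‖D₁‖₂³) · D₁ and U₂ = −λ(‖E₂‖₁/‖D₂‖₂³) · D₂. Then ‖U₂ − U₁‖₂ ≤ (λ√N/δ²) · ‖E₂ − E₁‖₂ + (2λm/δ³) · ‖D₂ − D₁‖₂. -/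

import Mathlib

open scoped RealInnerProductSpace

private lemma scalar_key (a b s δ : ℝ) (hδ : 0 < δ) (ha : δ ≤ a) (hb : δ ≤ b)
    (hs₂ : s ≤ a*b) :
    b^4*δ^6 + a^4*δ^6 - 2*s*a*b*δ^6 ≤ 4*a^4*b^4*(a^2+b^2) - 8*s*a^4*b^4 := by
  have ha0 : (0:ℝ) < a := hδ.trans_le ha
  have hb0 : (0:ℝ) < b := hδ.trans_le hb
  have h1 : (0:ℝ) ≤ a*b - s := by linarith
  have hd2 : δ*δ ≤ a*b := mul_le_mul ha hb hδ.le ha0.le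
  have hd6 : (δ*δ)^3 ≤ (a*b)^3 := pow_le_pow_left₀ (by positivity) hd2 3
  have h2 : (0:ℝ) ≤ 8*a^4*b^4 - 2*a*b*δ^6 := by
    nlinarith [mul_le_mul_of_nonneg_left hd6 (show (0:ℝ) ≤ 2*(a*b) by positivity),
      mul_pos ha0 hb0, pow_pos (mul_pos ha0 hb0) 4]
  have h4 : (0:ℝ) ≤ 4*a^4*b^4 - δ^6*(a+b)^2 := by
    rcases le_total a b with hle | hle
    · have k1 : a*(a+b) ≤ 2*b^2 := by nlinarith
      have k2 : a^2*(a+b)^2 ≤ 4*b^4 := by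
        nlinarith [mul_nonneg (mul_nonneg ha0.le hb0.le) (by positivity : (0:ℝ) ≤ a+b)]
      have k3 : δ^6 ≤ a^6 := pow_le_pow_left₀ hδ.le ha 6
      nlinarith [sq_nonneg (a+b), pow_pos ha0 4]
    · have k1 : b*(a+b) ≤ 2*a^2 := by nlinarith
      have k2 : b^2*(a+b)^2 ≤ 4*a^4 := by
        nlinarith [mul_nonneg (mul_nonneg hb0.le ha0.le) (by positivity : (0:ℝ) ≤ a+b)]
      have k3 : δ^6 ≤ b^6 := pow_le_pow_left₀ hδ.le hb 6
      nlinarith [sq_nonneg (a+b), pow_pos hb0 4]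
  nlinarith [mul_nonneg h1 h2, mul_nonneg (sq_nonneg (a-b)) h4]

private lemma vec_key {F : Type*} [NormedAddCommGroup F] [InnerProductSpace ℝ F]
    (x y : F) (δ : ℝ) (hδ : 0 < δ) (ha : δ ≤ ‖x‖) (hb : δ ≤ ‖y‖) :
    ‖(‖y‖^3)⁻¹ • y - (‖x‖^3)⁻¹ • x‖ ≤ 2/δ^3 * ‖y - x‖ := by
  set a := ‖x‖ with hA
  set b := ‖y‖ with hB
  have ha0 : (0:ℝ) < a := hδ.trans_le ha
  have hb0 : (0:ℝ) < b := hδ.trans_le hb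
  set s := ⟪y, x⟫ with hS
  have hs : s ≤ a*b := le_trans (real_inner_le_norm y x) (by rw [mul_comm])
  have hL : ‖(b^3)⁻¹ • y - (a^3)⁻¹ • x‖^2
      = (b^3)⁻¹^2*b^2 + (a^3)⁻¹^2*a^2 - 2*((b^3)⁻¹*(a^3)⁻¹*s) := by
    rw [norm_sub_sq_real, norm_smul, norm_smul, real_inner_smul_left, real_inner_smul_right]
    simp only [Real.norm_eq_abs, abs_inv, abs_pow, ← hA, ← hB, abs_of_pos ha0, abs_of_pos hb0,
      ← hS]
    ring
  have hR : (2/δ^3 * ‖y - x‖)^2 = 4/δ^6 * (b^2 - 2*s + a^2) := by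
    rw [mul_pow, norm_sub_sq_real]
    rw [← hS, ← hA, ← hB]
    field_simp
    ring
  have key := scalar_key a b s δ hδ ha hb hs
  have h2 : ‖(b^3)⁻¹ • y - (a^3)⁻¹ • x‖^2 ≤ (2/δ^3 * ‖y - x‖)^2 := by
    rw [hL, hR]
    have hane : a ≠ 0 := ha0.ne'
    have hbne : b ≠ 0 := hb0.ne'
    have hdne : δ ≠ 0 := hδ.ne'
    rw [div_mul_eq_mul_div, sub_le_iff_le_add]
    rw [div_add' _ _ _ (by positivity), le_div_iff₀ (by positivity : (0:ℝ) < δ^6)]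
    field_simp
    nlinarith [mul_le_mul_of_nonneg_left key (show (0:ℝ) ≤ a^5*b^5 by positivity)]
  calc ‖(b^3)⁻¹ • y - (a^3)⁻¹ • x‖ = Real.sqrt (‖(b^3)⁻¹ • y - (a^3)⁻¹ • x‖^2) :=
        (Real.sqrt_sq (norm_nonneg _)).symm
    _ ≤ Real.sqrt ((2/δ^3 * ‖y - x‖)^2) := Real.sqrt_le_sqrt h2
    _ = 2/δ^3 * ‖y - x‖ := Real.sqrt_sq (by positivity)

private lemma l1_le_sqrt_card {ι : Type*} [Fintype ι] (x : ι → ℝ) :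
    ∑ i, |x i| ≤ Real.sqrt (Fintype.card ι) * Real.sqrt (∑ i, x i ^ 2) := by
  have h : (∑ i, |x i|)^2 ≤ (Fintype.card ι : ℝ) * ∑ i, x i ^ 2 := by
    have := sq_sum_le_card_mul_sum_sq (s := Finset.univ) (f := fun i => |x i|)
    simpa [sq_abs, Finset.card_univ] using this
  calc ∑ i, |x i| = Real.sqrt ((∑ i, |x i|)^2) :=
        (Real.sqrt_sq (Finset.sum_nonneg fun i _ => abs_nonneg _)).symm
    _ ≤ Real.sqrt ((Fintype.card ι : ℝ) * ∑ i, x i ^ 2) := Real.sqrt_le_sqrt h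
    _ = _ := Real.sqrt_mul (Nat.cast_nonneg _) _

/-- Key estimate in Lemma 4 for the TNF+ model: with
`U₁ = −λ(‖E₁‖₁/‖D₁‖₂³) • D₁` and `U₂ = −λ(‖E₂‖₁/‖D₂‖₂³) • D₂`, if
`‖D₁‖₂, ‖D₂‖₂ ≥ δ` and `‖E₁‖₁ ≤ m`, then
`‖U₂ − U₁‖₂ ≤ (λ√N/δ²) ‖E₂ − E₁‖₂ + (2λm/δ³) ‖D₂ − D₁‖₂`. -/
theorem dual_variable_estimate_tnf_plus {ι : Type*} [Fintype ι] (N : ℕ)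
    (hN : Fintype.card ι = N)
    (lam δ m : ℝ) (hlam : 0 < lam) (hδ : 0 < δ) (hm : 0 ≤ m)
    (E₁ E₂ D₁ D₂ : ι → ℝ)
    (hD₁ : δ ≤ Real.sqrt (∑ i, D₁ i ^ 2))
    (hD₂ : δ ≤ Real.sqrt (∑ i, D₂ i ^ 2))
    (hE₁ : ∑ i, |E₁ i| ≤ m)
    (U₁ U₂ : ι → ℝ)
    (hU₁ : U₁ = fun i =>
      -(lam * (∑ j, |E₁ j|) / (Real.sqrt (∑ j, D₁ j ^ 2)) ^ 3) * D₁ i)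
    (hU₂ : U₂ = fun i =>
      -(lam * (∑ j, |E₂ j|) / (Real.sqrt (∑ j, D₂ j ^ 2)) ^ 3) * D₂ i) :
    Real.sqrt (∑ i, (U₂ i - U₁ i) ^ 2) ≤
      lam * Real.sqrt N / δ ^ 2 * Real.sqrt (∑ i, (E₂ i - E₁ i) ^ 2) +
        2 * lam * m / δ ^ 3 * Real.sqrt (∑ i, (D₂ i - D₁ i) ^ 2) := by
  set a := Real.sqrt (∑ i, D₁ i ^ 2) with hA
  set b := Real.sqrt (∑ i, D₂ i ^ 2) with hB
  set e₁ := ∑ i, |E₁ i| with hE1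
  set e₂ := ∑ i, |E₂ i| with hE2
  have ha0 : (0:ℝ) < a := hδ.trans_le hD₁
  have hb0 : (0:ℝ) < b := hδ.trans_le hD₂
  have he₁0 : (0:ℝ) ≤ e₁ := Finset.sum_nonneg fun i _ => abs_nonneg _
  have he₂0 : (0:ℝ) ≤ e₂ := Finset.sum_nonneg fun i _ => abs_nonneg _
  set V : (ι → ℝ) → EuclideanSpace ℝ ι := fun x => (WithLp.equiv 2 (ι → ℝ)).symm x with hVdef
  have hV : ∀ x : ι → ℝ, ‖V x‖ = Real.sqrt (∑ i, x i ^ 2) := by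
    intro x; rw [EuclideanSpace.norm_eq]
    simp only [Real.norm_eq_abs, sq_abs]
    rfl
  have hDa : ‖V D₁‖ = a := hV D₁
  have hDb : ‖V D₂‖ = b := hV D₂
  -- the decomposition
  have hfun : U₂ - U₁
      = (-(lam*(e₂-e₁))/b^3) • D₂ + (-(lam*e₁)) • ((b^3)⁻¹ • D₂ - (a^3)⁻¹ • D₁) := by
    rw [hU₁, hU₂]
    funext i
    simp only [Pi.sub_apply, Pi.add_apply, Pi.smul_apply, smul_eq_mul]
    field_simp
    ring
  have hdecomp : V U₂ - V U₁
      = (-(lam*(e₂-e₁))/b^3) • V D₂ + (-(lam*e₁)) • ((b^3)⁻¹ • V D₂ - (a^3)⁻¹ • V D₁) := by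
    calc V U₂ - V U₁ = V (U₂ - U₁) := rfl
      _ = V ((-(lam*(e₂-e₁))/b^3) • D₂
            + (-(lam*e₁)) • ((b^3)⁻¹ • D₂ - (a^3)⁻¹ • D₁)) := congrArg V hfun
      _ = (-(lam*(e₂-e₁))/b^3) • V D₂
            + (-(lam*e₁)) • ((b^3)⁻¹ • V D₂ - (a^3)⁻¹ • V D₁) := rfl
  -- bound on the first term
  have habs : |e₂ - e₁| ≤ ∑ i, |E₂ i - E₁ i| := by
    rw [hE1, hE2, ← Finset.sum_sub_distrib]
    refine le_trans (Finset.abs_sum_le_sum_abs _ _) (Finset.sum_le_sum fun i _ => ?_)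
    exact abs_abs_sub_abs_le_abs_sub _ _
  have hcs : ∑ i, |E₂ i - E₁ i| ≤ Real.sqrt N * Real.sqrt (∑ i, (E₂ i - E₁ i) ^ 2) := by
    have := l1_le_sqrt_card (fun i => E₂ i - E₁ i)
    rwa [hN] at this
  have hEnn : (0:ℝ) ≤ Real.sqrt (∑ i, (E₂ i - E₁ i) ^ 2) := Real.sqrt_nonneg _
  have hb1 : ‖(-(lam*(e₂-e₁))/b^3) • V D₂‖
      ≤ lam * Real.sqrt N / δ ^ 2 * Real.sqrt (∑ i, (E₂ i - E₁ i) ^ 2) := by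
    rw [norm_smul, hDb, Real.norm_eq_abs, abs_div, abs_neg, abs_mul,
      abs_of_pos hlam, abs_of_pos (pow_pos hb0 3)]
    have step : |e₂ - e₁| ≤ Real.sqrt N * Real.sqrt (∑ i, (E₂ i - E₁ i) ^ 2) :=
      le_trans habs hcs
    have hδ2b2 : δ^2 ≤ b^2 := pow_le_pow_left₀ hδ.le hD₂ 2
    have heq : lam * |e₂ - e₁| / b ^ 3 * b = lam * |e₂ - e₁| / b^2 := by
      field_simp
    rw [heq]
    calc lam * |e₂ - e₁| / b^2
        ≤ lam * (Real.sqrt N * Real.sqrt (∑ i, (E₂ i - E₁ i) ^ 2)) / δ^2 :=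
          div_le_div₀ (by positivity) (mul_le_mul_of_nonneg_left step hlam.le)
            (by positivity) hδ2b2
      _ = lam * Real.sqrt N / δ ^ 2 * Real.sqrt (∑ i, (E₂ i - E₁ i) ^ 2) := by ring
  -- bound on the second term
  have hb2 : ‖(-(lam*e₁)) • ((b^3)⁻¹ • V D₂ - (a^3)⁻¹ • V D₁)‖
      ≤ 2 * lam * m / δ ^ 3 * Real.sqrt (∑ i, (D₂ i - D₁ i) ^ 2) := by
    rw [norm_smul, Real.norm_eq_abs, abs_neg, abs_mul, abs_of_pos hlam, abs_of_nonneg he₁0]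
    have hvk := vec_key (V D₁) (V D₂) δ hδ (hDa ▸ hD₁) (hDb ▸ hD₂)
    rw [hDa, hDb] at hvk
    have hsub : V D₂ - V D₁ = V (D₂ - D₁) := rfl
    rw [hsub, hV] at hvk
    have hDnn : (0:ℝ) ≤ Real.sqrt (∑ i, (D₂ i - D₁ i) ^ 2) := Real.sqrt_nonneg _
    have hsum : ∑ i, ((D₂ - D₁) i) ^ 2 = ∑ i, (D₂ i - D₁ i) ^ 2 := by simp
    rw [hsum] at hvk
    calc lam * e₁ * ‖(b^3)⁻¹ • V D₂ - (a^3)⁻¹ • V D₁‖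
        ≤ lam * m * (2/δ^3 * Real.sqrt (∑ i, (D₂ i - D₁ i) ^ 2)) := by
          apply mul_le_mul (mul_le_mul_of_nonneg_left hE₁ hlam.le) hvk (norm_nonneg _)
          positivity
      _ = 2 * lam * m / δ ^ 3 * Real.sqrt (∑ i, (D₂ i - D₁ i) ^ 2) := by ring
  -- combine
  have hgoal : Real.sqrt (∑ i, (U₂ i - U₁ i) ^ 2) = ‖V U₂ - V U₁‖ := by
    have hsub : V U₂ - V U₁ = V (U₂ - U₁) := rfl
    rw [hsub, hV]
    simp
  rw [hgoal, hdecomp]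
  exact le_trans (norm_add_le _ _) (add_le_add hb1 hb2)
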